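/- Let φ : (0,∞) → ℝ be twice continuously differentiable and satisfy the ordinary differential equation 2φ̈ − φ̇² − 3φ̇φ̈ + φ̇³ = e^{2φ} on (0,∞). Then the function t ↦ e^{−φ(t)}·φ̇(t)²·(φ̇(t) − 1) + e^{φ(t)} is constant on (0,∞); equivalently, there is a constant c with φ̇²(φ̇ − 1) = −e^{2φ} + c·e^{φ}. -/

import Mathlib

open Set Real

/-- a first integral of the reduced Monge–Ampère ODE on the exponential
cone: if 2φ̈ − φ̇² − 3φ̇φ̈ + φ̇³ = e^{2φ} on (0,∞), then
e^{−φ}·φ̇²·(φ̇ − 1) + e^{φ} is constant, i.e., there is c with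
φ̇²(φ̇ − 1) = −e^{2φ} + c·e^{φ}. -/
theorem first_integral_exp_cone_ode (φ : ℝ → ℝ) (hφ : ContDiffOn ℝ 2 φ (Set.Ioi 0))
    (hode : ∀ t : ℝ, 0 < t →
      2 * deriv (deriv φ) t - (deriv φ t)^2 - 3 * deriv φ t * deriv (deriv φ) t
        + (deriv φ t)^3 = Real.exp (2 * φ t)) :
    ∃ c : ℝ, ∀ t : ℝ, 0 < t →
      Real.exp (-(φ t)) * (deriv φ t)^2 * (deriv φ t - 1) + Real.exp (φ t) = c ∧
      (deriv φ t)^2 * (deriv φ t - 1) = -Real.exp (2 * φ t) + c * Real.exp (φ t) := by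
  set F : ℝ → ℝ :=
    fun s => Real.exp (-(φ s)) * ((deriv φ s)^2 * (deriv φ s - 1)) + Real.exp (φ s) with hF
  have hopen : IsOpen (Set.Ioi (0:ℝ)) := isOpen_Ioi
  have hφ' : ContDiffOn ℝ 1 (deriv φ) (Set.Ioi 0) :=
    hφ.deriv_of_isOpen hopen (by norm_num)
  have key : ∀ t ∈ Set.Ioi (0:ℝ), HasDerivAt F 0 t := by
    intro t ht
    have h1 : HasDerivAt φ (deriv φ t) t :=
      ((hφ.differentiableOn (by norm_num)).differentiableAt (hopen.mem_nhds ht)).hasDerivAt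
    have h2 : HasDerivAt (deriv φ) (deriv (deriv φ) t) t :=
      ((hφ'.differentiableOn one_ne_zero).differentiableAt (hopen.mem_nhds ht)).hasDerivAt
    set p := deriv φ t with hp
    set q := deriv (deriv φ) t with hq
    have hA : HasDerivAt (fun s => Real.exp (-(φ s))) (Real.exp (-(φ t)) * (-p)) t :=
      h1.neg.exp
    have hB : HasDerivAt (fun s => (deriv φ s)^2 * (deriv φ s - 1))
        ((2 * p ^ 1 * q) * (p - 1) + p^2 * q) t :=
      (h2.pow 2).mul (h2.sub_const 1)
    have hC : HasDerivAt (fun s => Real.exp (φ s)) (Real.exp (φ t) * p) t := h1.exp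
    have hD := (hA.mul hB).add hC
    have hode' := hode t ht
    have h3 : Real.exp (φ t) = Real.exp (-(φ t)) * Real.exp (2 * φ t) := by
      rw [← Real.exp_add]; ring_nf
    have hz : Real.exp (-(φ t)) * (-p) * (p^2 * (p - 1)) +
        Real.exp (-(φ t)) * ((2 * p ^ 1 * q) * (p - 1) + p^2 * q) + Real.exp (φ t) * p = 0 := by
      rw [h3, ← hode']
      ring
    rw [hz] at hD
    exact hD
  have hconst : ∀ t ∈ Set.Ioi (0:ℝ), F t = F 1 := by
    intro t ht
    refine (convex_Ioi (0:ℝ)).is_const_of_fderivWithin_eq_zero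
      (𝕜 := ℝ) (f := F) (fun x hx => ((key x hx).differentiableAt).differentiableWithinAt)
      (fun x hx => ?_) ht (by norm_num : (1:ℝ) ∈ Set.Ioi (0:ℝ))
    rw [fderivWithin_of_isOpen hopen hx, (key x hx).hasFDerivAt.fderiv]
    ext; simp
  refine ⟨F 1, fun t ht => ?_⟩
  have h1 := hconst t ht
  have hfirst : Real.exp (-(φ t)) * (deriv φ t)^2 * (deriv φ t - 1) + Real.exp (φ t) = F 1 := by
    rw [← h1]; simp only [hF]; ring
  refine ⟨hfirst, ?_⟩
  have he : Real.exp (2 * φ t) = Real.exp (φ t) * Real.exp (φ t) := by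
    rw [two_mul, Real.exp_add]
  have hinv : Real.exp (-(φ t)) * Real.exp (φ t) = 1 := by
    rw [← Real.exp_add]; simp
  have h2 : F t * Real.exp (φ t)
      = (deriv φ t)^2 * (deriv φ t - 1) + Real.exp (2 * φ t) := by
    show (Real.exp (-(φ t)) * ((deriv φ t)^2 * (deriv φ t - 1)) + Real.exp (φ t))
        * Real.exp (φ t) = _
    rw [he]
    linear_combination ((deriv φ t)^2 * (deriv φ t - 1)) * hinv
  have h4 : F t * Real.exp (φ t) = F 1 * Real.exp (φ t) := by rw [h1]
  linarith [h2, h4]
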